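/- Let C ∈ Λ satisfy ⟨C,C⟩ = 2 and ⟨C,K⟩ = −4. Then for every D ∈ Λ the following identity holds in Λ: D + Σ_{E} ⟨D,E⟩·E = Σ_{(F,G)} ⟨D,F⟩·G, where the first sum runs over all line classes E with ⟨C,E⟩ = 0, and the second sum runs over all ordered pairs (F,G) of fiber classes with F + G = C. -/

import Mathlib

/-- The Picard lattice of the cubic surface: free ℤ-module of rank 7
with basis h, e₁, …, e₆ (coordinates: index 0 ↦ coefficient of h,
index i+1 ↦ coefficient of eᵢ). -/
abbrev Lam : Type := Fin 7 → ℤ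

/-- The intersection form: ⟨h,h⟩ = 1, ⟨eᵢ,eᵢ⟩ = −1, distinct basis vectors orthogonal. -/
def ip (x y : Lam) : ℤ := x 0 * y 0 - ∑ i : Fin 6, x i.succ * y i.succ

/-- The canonical class K = −3h + e₁ + ⋯ + e₆. -/
def Kc : Lam := ![-3, 1, 1, 1, 1, 1, 1]

/-- A line class: x with ⟨x,x⟩ = −1 and ⟨x,K⟩ = −1. -/
def IsLine (x : Lam) : Prop := ip x x = -1 ∧ ip x Kc = -1

/-- A fiber class: x with ⟨x,x⟩ = 0 and ⟨x,K⟩ = −2. -/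
def IsFiber (x : Lam) : Prop := ip x x = 0 ∧ ip x Kc = -2

/- ### Auxiliary setup -/

abbrev T7 := (ℤ×ℤ×ℤ×ℤ×ℤ×ℤ×ℤ)

def toLam (t : T7) : Lam := fun i =>
  if i.val = 0 then t.1 else if i.val = 1 then t.2.1 else if i.val = 2 then t.2.2.1
  else if i.val = 3 then t.2.2.2.1 else if i.val = 4 then t.2.2.2.2.1
  else if i.val = 5 then t.2.2.2.2.2.1 else t.2.2.2.2.2.2
def linesT : List T7 := [(0,0,0,0,0,0,1), (0,0,0,0,0,1,0), (0,0,0,0,1,0,0), (0,0,0,1,0,0,0), (0,0,1,0,0,0,0), (0,1,0,0,0,0,0), (1,-1,-1,0,0,0,0), (1,-1,0,-1,0,0,0), (1,-1,0,0,-1,0,0), (1,-1,0,0,0,-1,0), (1,-1,0,0,0,0,-1), (1,0,-1,-1,0,0,0), (1,0,-1,0,-1,0,0), (1,0,-1,0,0,-1,0), (1,0,-1,0,0,0,-1), (1,0,0,-1,-1,0,0), (1,0,0,-1,0,-1,0), (1,0,0,-1,0,0,-1), (1,0,0,0,-1,-1,0), (1,0,0,0,-1,0,-1), (1,0,0,0,0,-1,-1),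 (2,-1,-1,-1,-1,-1,0), (2,-1,-1,-1,-1,0,-1), (2,-1,-1,-1,0,-1,-1), (2,-1,-1,0,-1,-1,-1), (2,-1,0,-1,-1,-1,-1), (2,0,-1,-1,-1,-1,-1)]
def fibersT : List T7 := [(1,-1,0,0,0,0,0), (1,0,-1,0,0,0,0), (1,0,0,-1,0,0,0), (1,0,0,0,-1,0,0), (1,0,0,0,0,-1,0), (1,0,0,0,0,0,-1), (2,-1,-1,-1,-1,0,0), (2,-1,-1,-1,0,-1,0), (2,-1,-1,-1,0,0,-1), (2,-1,-1,0,-1,-1,0), (2,-1,-1,0,-1,0,-1), (2,-1,-1,0,0,-1,-1), (2,-1,0,-1,-1,-1,0), (2,-1,0,-1,-1,0,-1), (2,-1,0,-1,0,-1,-1), (2,-1,0,0,-1,-1,-1), (2,0,-1,-1,-1,-1,0), (2,0,-1,-1,-1,0,-1), (2,0,-1,-1,0,-1,-1), (2,0,-1,0,-1,-1,-1), (2,0,0,-1,-1,-1,-1), (3,-2,-1,-1,-1,-1,-1), (3,-1,-2,-1,-1,-1,-1), (3,-1,-1,-2,-1,-1,-1), (3,-1,-1,-1,-2,-1,-1),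 (3,-1,-1,-1,-1,-2,-1), (3,-1,-1,-1,-1,-1,-2)]
def CsT0 : List T7 := [(2,-1,-1,0,0,0,0), (2,-1,0,-1,0,0,0), (2,-1,0,0,-1,0,0), (2,-1,0,0,0,-1,0), (2,-1,0,0,0,0,-1), (2,0,-1,-1,0,0,0), (2,0,-1,0,-1,0,0), (2,0,-1,0,0,-1,0), (2,0,-1,0,0,0,-1), (2,0,0,-1,-1,0,0), (2,0,0,-1,0,-1,0), (2,0,0,-1,0,0,-1), (2,0,0,0,-1,-1,0), (2,0,0,0,-1,0,-1), (2,0,0,0,0,-1,-1), (3,-2,-1,-1,-1,0,0), (3,-2,-1,-1,0,-1,0), (3,-2,-1,-1,0,0,-1), (3,-2,-1,0,-1,-1,0), (3,-2,-1,0,-1,0,-1), (3,-2,-1,0,0,-1,-1), (3,-2,0,-1,-1,-1,0), (3,-2,0,-1,-1,0,-1), (3,-2,0,-1,0,-1,-1)]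
def CsT1 : List T7 := [(3,-2,0,0,-1,-1,-1), (3,-1,-2,-1,-1,0,0), (3,-1,-2,-1,0,-1,0), (3,-1,-2,-1,0,0,-1), (3,-1,-2,0,-1,-1,0), (3,-1,-2,0,-1,0,-1), (3,-1,-2,0,0,-1,-1), (3,-1,-1,-2,-1,0,0), (3,-1,-1,-2,0,-1,0), (3,-1,-1,-2,0,0,-1), (3,-1,-1,-1,-2,0,0), (3,-1,-1,-1,0,-2,0), (3,-1,-1,-1,0,0,-2), (3,-1,-1,0,-2,-1,0), (3,-1,-1,0,-2,0,-1), (3,-1,-1,0,-1,-2,0), (3,-1,-1,0,-1,0,-2), (3,-1,-1,0,0,-2,-1), (3,-1,-1,0,0,-1,-2), (3,-1,0,-2,-1,-1,0), (3,-1,0,-2,-1,0,-1), (3,-1,0,-2,0,-1,-1), (3,-1,0,-1,-2,-1,0), (3,-1,0,-1,-2,0,-1)]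
def CsT2 : List T7 := [(3,-1,0,-1,-1,-2,0), (3,-1,0,-1,-1,0,-2), (3,-1,0,-1,0,-2,-1), (3,-1,0,-1,0,-1,-2), (3,-1,0,0,-2,-1,-1), (3,-1,0,0,-1,-2,-1), (3,-1,0,0,-1,-1,-2), (3,0,-2,-1,-1,-1,0), (3,0,-2,-1,-1,0,-1), (3,0,-2,-1,0,-1,-1), (3,0,-2,0,-1,-1,-1), (3,0,-1,-2,-1,-1,0), (3,0,-1,-2,-1,0,-1), (3,0,-1,-2,0,-1,-1), (3,0,-1,-1,-2,-1,0), (3,0,-1,-1,-2,0,-1), (3,0,-1,-1,-1,-2,0), (3,0,-1,-1,-1,0,-2), (3,0,-1,-1,0,-2,-1), (3,0,-1,-1,0,-1,-2), (3,0,-1,0,-2,-1,-1), (3,0,-1,0,-1,-2,-1), (3,0,-1,0,-1,-1,-2), (3,0,0,-2,-1,-1,-1)]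
def CsT3 : List T7 := [(3,0,0,-1,-2,-1,-1), (3,0,0,-1,-1,-2,-1), (3,0,0,-1,-1,-1,-2), (4,-3,-1,-1,-1,-1,-1), (4,-2,-2,-2,-1,-1,0), (4,-2,-2,-2,-1,0,-1), (4,-2,-2,-2,0,-1,-1), (4,-2,-2,-1,-2,-1,0), (4,-2,-2,-1,-2,0,-1), (4,-2,-2,-1,-1,-2,0), (4,-2,-2,-1,-1,0,-2), (4,-2,-2,-1,0,-2,-1), (4,-2,-2,-1,0,-1,-2), (4,-2,-2,0,-2,-1,-1), (4,-2,-2,0,-1,-2,-1), (4,-2,-2,0,-1,-1,-2), (4,-2,-1,-2,-2,-1,0), (4,-2,-1,-2,-2,0,-1), (4,-2,-1,-2,-1,-2,0), (4,-2,-1,-2,-1,0,-2), (4,-2,-1,-2,0,-2,-1), (4,-2,-1,-2,0,-1,-2), (4,-2,-1,-1,-2,-2,0), (4,-2,-1,-1,-2,0,-2)]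
def CsT4 : List T7 := [(4,-2,-1,-1,0,-2,-2), (4,-2,-1,0,-2,-2,-1), (4,-2,-1,0,-2,-1,-2), (4,-2,-1,0,-1,-2,-2), (4,-2,0,-2,-2,-1,-1), (4,-2,0,-2,-1,-2,-1), (4,-2,0,-2,-1,-1,-2), (4,-2,0,-1,-2,-2,-1), (4,-2,0,-1,-2,-1,-2), (4,-2,0,-1,-1,-2,-2), (4,-1,-3,-1,-1,-1,-1), (4,-1,-2,-2,-2,-1,0), (4,-1,-2,-2,-2,0,-1), (4,-1,-2,-2,-1,-2,0), (4,-1,-2,-2,-1,0,-2), (4,-1,-2,-2,0,-2,-1), (4,-1,-2,-2,0,-1,-2), (4,-1,-2,-1,-2,-2,0), (4,-1,-2,-1,-2,0,-2), (4,-1,-2,-1,0,-2,-2), (4,-1,-2,0,-2,-2,-1), (4,-1,-2,0,-2,-1,-2), (4,-1,-2,0,-1,-2,-2), (4,-1,-1,-3,-1,-1,-1)]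
def CsT5 : List T7 := [(4,-1,-1,-2,-2,-2,0), (4,-1,-1,-2,-2,0,-2), (4,-1,-1,-2,0,-2,-2), (4,-1,-1,-1,-3,-1,-1), (4,-1,-1,-1,-1,-3,-1), (4,-1,-1,-1,-1,-1,-3), (4,-1,-1,0,-2,-2,-2), (4,-1,0,-2,-2,-2,-1), (4,-1,0,-2,-2,-1,-2), (4,-1,0,-2,-1,-2,-2), (4,-1,0,-1,-2,-2,-2), (4,0,-2,-2,-2,-1,-1), (4,0,-2,-2,-1,-2,-1), (4,0,-2,-2,-1,-1,-2), (4,0,-2,-1,-2,-2,-1), (4,0,-2,-1,-2,-1,-2), (4,0,-2,-1,-1,-2,-2), (4,0,-1,-2,-2,-2,-1), (4,0,-1,-2,-2,-1,-2), (4,0,-1,-2,-1,-2,-2), (4,0,-1,-1,-2,-2,-2), (5,-3,-2,-2,-2,-1,-1), (5,-3,-2,-2,-1,-2,-1), (5,-3,-2,-2,-1,-1,-2)]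
def CsT6 : List T7 := [(5,-3,-2,-1,-2,-2,-1), (5,-3,-2,-1,-2,-1,-2), (5,-3,-2,-1,-1,-2,-2), (5,-3,-1,-2,-2,-2,-1), (5,-3,-1,-2,-2,-1,-2), (5,-3,-1,-2,-1,-2,-2), (5,-3,-1,-1,-2,-2,-2), (5,-2,-3,-2,-2,-1,-1), (5,-2,-3,-2,-1,-2,-1), (5,-2,-3,-2,-1,-1,-2), (5,-2,-3,-1,-2,-2,-1), (5,-2,-3,-1,-2,-1,-2), (5,-2,-3,-1,-1,-2,-2), (5,-2,-2,-3,-2,-1,-1), (5,-2,-2,-3,-1,-2,-1), (5,-2,-2,-3,-1,-1,-2), (5,-2,-2,-2,-3,-1,-1), (5,-2,-2,-2,-1,-3,-1), (5,-2,-2,-2,-1,-1,-3), (5,-2,-2,-1,-3,-2,-1), (5,-2,-2,-1,-3,-1,-2), (5,-2,-2,-1,-2,-3,-1), (5,-2,-2,-1,-2,-1,-3), (5,-2,-2,-1,-1,-3,-2)]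
def CsT7 : List T7 := [(5,-2,-2,-1,-1,-2,-3), (5,-2,-1,-3,-2,-2,-1), (5,-2,-1,-3,-2,-1,-2), (5,-2,-1,-3,-1,-2,-2), (5,-2,-1,-2,-3,-2,-1), (5,-2,-1,-2,-3,-1,-2), (5,-2,-1,-2,-2,-3,-1), (5,-2,-1,-2,-2,-1,-3), (5,-2,-1,-2,-1,-3,-2), (5,-2,-1,-2,-1,-2,-3), (5,-2,-1,-1,-3,-2,-2), (5,-2,-1,-1,-2,-3,-2), (5,-2,-1,-1,-2,-2,-3), (5,-1,-3,-2,-2,-2,-1), (5,-1,-3,-2,-2,-1,-2), (5,-1,-3,-2,-1,-2,-2), (5,-1,-3,-1,-2,-2,-2), (5,-1,-2,-3,-2,-2,-1), (5,-1,-2,-3,-2,-1,-2), (5,-1,-2,-3,-1,-2,-2), (5,-1,-2,-2,-3,-2,-1), (5,-1,-2,-2,-3,-1,-2), (5,-1,-2,-2,-2,-3,-1), (5,-1,-2,-2,-2,-1,-3)]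
def CsT8 : List T7 := [(5,-1,-2,-2,-1,-3,-2), (5,-1,-2,-2,-1,-2,-3), (5,-1,-2,-1,-3,-2,-2), (5,-1,-2,-1,-2,-3,-2), (5,-1,-2,-1,-2,-2,-3), (5,-1,-1,-3,-2,-2,-2), (5,-1,-1,-2,-3,-2,-2), (5,-1,-1,-2,-2,-3,-2), (5,-1,-1,-2,-2,-2,-3), (6,-3,-3,-2,-2,-2,-2), (6,-3,-2,-3,-2,-2,-2), (6,-3,-2,-2,-3,-2,-2), (6,-3,-2,-2,-2,-3,-2), (6,-3,-2,-2,-2,-2,-3), (6,-2,-3,-3,-2,-2,-2), (6,-2,-3,-2,-3,-2,-2), (6,-2,-3,-2,-2,-3,-2), (6,-2,-3,-2,-2,-2,-3), (6,-2,-2,-3,-3,-2,-2), (6,-2,-2,-3,-2,-3,-2), (6,-2,-2,-3,-2,-2,-3), (6,-2,-2,-2,-3,-3,-2), (6,-2,-2,-2,-3,-2,-3), (6,-2,-2,-2,-2,-3,-3)]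
def CsT : List T7 := CsT0 ++ CsT1 ++ CsT2 ++ CsT3 ++ CsT4 ++ CsT5 ++ CsT6 ++ CsT7 ++ CsT8
def linesL : List Lam := linesT.map toLam
def fibersL : List Lam := fibersT.map toLam
def CsL : List Lam := CsT.map toLam

lemma ip_eval (x y : Lam) : ip x y = x 0 * y 0 -
    (x 1 * y 1 + x 2 * y 2 + x 3 * y 3 + x 4 * y 4 + x 5 * y 5 + x 6 * y 6) := by
  simp [ip, Fin.sum_univ_six]

lemma ipK (x : Lam) : ip x Kc = -3 * x 0 - (x 1 + x 2 + x 3 + x 4 + x 5 + x 6) := by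
  rw [ip_eval]
  have h0 : Kc 0 = -3 := rfl
  have h1 : Kc 1 = 1 := rfl
  have h2 : Kc 2 = 1 := rfl
  have h3 : Kc 3 = 1 := rfl
  have h4 : Kc 4 = 1 := rfl
  have h5 : Kc 5 = 1 := rfl
  have h6 : Kc 6 = 1 := rfl
  rw [h0,h1,h2,h3,h4,h5,h6]; ring

lemma ip_comm (x y : Lam) : ip x y = ip y x := by rw [ip_eval, ip_eval]; ring

lemma ip_add_left (x y z : Lam) : ip (x + y) z = ip x z + ip y z := by
  simp only [ip_eval, Pi.add_apply]; ring

lemma ip_smul_left (c : ℤ) (x z : Lam) : ip (c • x) z = c * ip x z := by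
  simp only [ip_eval, Pi.smul_apply, smul_eq_mul]; ring

lemma ip_sub_left (x y z : Lam) : ip (x - y) z = ip x z - ip y z := by
  simp only [ip_eval, Pi.sub_apply]; ring

lemma ip_sub_right (x y z : Lam) : ip x (y - z) = ip x y - ip x z := by
  simp only [ip_eval, Pi.sub_apply]; ring

lemma ip_add_right (x y z : Lam) : ip x (y + z) = ip x y + ip x z := by
  simp only [ip_eval, Pi.add_apply]; ring

lemma eq_toLam (x : Lam) : x = toLam (x 0, x 1, x 2, x 3, x 4, x 5, x 6) := by
  funext i; fin_cases i <;> rfl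

/- Cauchy–Schwarz helpers -/
lemma sq5 (b1 b2 b3 b4 b5 : ℤ) :
    (b1+b2+b3+b4+b5)^2 ≤ 5*(b1^2+b2^2+b3^2+b4^2+b5^2) := by
  nlinarith [sq_nonneg (b1-b2), sq_nonneg (b1-b3), sq_nonneg (b1-b4), sq_nonneg (b1-b5),
    sq_nonneg (b2-b3), sq_nonneg (b2-b4), sq_nonneg (b2-b5),
    sq_nonneg (b3-b4), sq_nonneg (b3-b5), sq_nonneg (b4-b5)]

lemma sq6 (b1 b2 b3 b4 b5 b6 : ℤ) :
    (b1+b2+b3+b4+b5+b6)^2 ≤ 6*(b1^2+b2^2+b3^2+b4^2+b5^2+b6^2) := by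
  nlinarith [sq_nonneg (b1-b2), sq_nonneg (b1-b3), sq_nonneg (b1-b4), sq_nonneg (b1-b5),
    sq_nonneg (b1-b6), sq_nonneg (b2-b3), sq_nonneg (b2-b4), sq_nonneg (b2-b5),
    sq_nonneg (b2-b6), sq_nonneg (b3-b4), sq_nonneg (b3-b5), sq_nonneg (b3-b6),
    sq_nonneg (b4-b5), sq_nonneg (b4-b6), sq_nonneg (b5-b6)]

/- Coordinate bounds. n = self-intersection, m with 3c + Σa = m. -/
lemma abound {a b1 b2 b3 b4 b5 c n m lo hi : ℤ}
    (hq : c*c - (a*a + (b1*b1+b2*b2+b3*b3+b4*b4+b5*b5)) = n)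
    (hs : 3*c + (a + (b1+b2+b3+b4+b5)) = m)
    (key : ∀ z : ℤ, 6*z^2 + (6*c - 2*m)*z + (m - 3*c)^2 - 5*(c*c - n) ≤ 0 → lo ≤ z ∧ z ≤ hi) :
    lo ≤ a ∧ a ≤ hi := by
  apply key
  have h5 := sq5 b1 b2 b3 b4 b5
  have hb : b1+b2+b3+b4+b5 = m - 3*c - a := by linarith
  have hbq : b1*b1+b2*b2+b3*b3+b4*b4+b5*b5 = c*c - n - a*a := by linarith
  have h5' : (m-3*c-a)^2 ≤ 5*(c*c-n-a*a) := by
    calc (m-3*c-a)^2 = (b1+b2+b3+b4+b5)^2 := by rw [hb]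
    _ ≤ 5*(b1^2+b2^2+b3^2+b4^2+b5^2) := h5
    _ = 5*(c*c-n-a*a) := by linear_combination 5*hbq
  nlinarith [h5']

/- Bounds for C-classes -/
lemma cbndC {c a1 a2 a3 a4 a5 a6 : ℤ}
    (hq : c*c - (a1*a1+a2*a2+a3*a3+a4*a4+a5*a5+a6*a6) = 2)
    (hs : 3*c + (a1+a2+a3+a4+a5+a6) = 4) : 2 ≤ c ∧ c ≤ 6 := by
  have h6 := sq6 a1 a2 a3 a4 a5 a6
  constructor <;> nlinarith [h6]

lemma keyC {c : ℤ} (hc1 : 2 ≤ c) (hc2 : c ≤ 6) :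
    ∀ z : ℤ, 6*z^2 + (6*c - 2*4)*z + (4 - 3*c)^2 - 5*(c*c - 2) ≤ 0 → -3 ≤ z ∧ z ≤ 0 := by
  intro z h
  constructor <;> nlinarith [h, sq_nonneg (c-2), sq_nonneg (c-6), sq_nonneg (z+2), sq_nonneg (z-1)]

/- Bounds for lines -/
lemma cbndL {c a1 a2 a3 a4 a5 a6 : ℤ}
    (hq : c*c - (a1*a1+a2*a2+a3*a3+a4*a4+a5*a5+a6*a6) = -1)
    (hs : 3*c + (a1+a2+a3+a4+a5+a6) = 1) : 0 ≤ c ∧ c ≤ 2 := by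
  have h6 := sq6 a1 a2 a3 a4 a5 a6
  constructor <;> nlinarith [h6]

lemma keyL {c : ℤ} (hc1 : 0 ≤ c) (hc2 : c ≤ 2) :
    ∀ z : ℤ, 6*z^2 + (6*c - 2*1)*z + (1 - 3*c)^2 - 5*(c*c - (-1)) ≤ 0 → -1 ≤ z ∧ z ≤ 1 := by
  intro z h
  constructor <;> nlinarith [h, sq_nonneg (c-1), sq_nonneg c, sq_nonneg (z+1), sq_nonneg (z-1), sq_nonneg (c-2)]

/- Bounds for fibers -/
lemma cbndF {c a1 a2 a3 a4 a5 a6 : ℤ}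
    (hq : c*c - (a1*a1+a2*a2+a3*a3+a4*a4+a5*a5+a6*a6) = 0)
    (hs : 3*c + (a1+a2+a3+a4+a5+a6) = 2) : 1 ≤ c ∧ c ≤ 3 := by
  have h6 := sq6 a1 a2 a3 a4 a5 a6
  constructor <;> nlinarith [h6]

lemma keyF {c : ℤ} (hc1 : 1 ≤ c) (hc2 : c ≤ 3) :
    ∀ z : ℤ, 6*z^2 + (6*c - 2*2)*z + (2 - 3*c)^2 - 5*(c*c - 0) ≤ 0 → -2 ≤ z ∧ z ≤ 1 := by
  intro z h
  constructor <;> nlinarith [h, sq_nonneg (c-1), sq_nonneg (c-3), sq_nonneg (z+2), sq_nonneg (z-1)]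

/- Bridges: bounded-box enumeration (the cheap ones here; big one separate) -/
set_option maxRecDepth 40000 in
lemma bridgeL : ∀ c ∈ Finset.Icc (0:ℤ) 2, ∀ a1 ∈ Finset.Icc (-1:ℤ) 1, ∀ a2 ∈ Finset.Icc (-1:ℤ) 1,
    ∀ a3 ∈ Finset.Icc (-1:ℤ) 1, ∀ a4 ∈ Finset.Icc (-1:ℤ) 1, ∀ a5 ∈ Finset.Icc (-1:ℤ) 1,
    ∀ a6 ∈ Finset.Icc (-1:ℤ) 1,
    c*c - (a1*a1+a2*a2+a3*a3+a4*a4+a5*a5+a6*a6) = -1 ∧ 3*c + (a1+a2+a3+a4+a5+a6) = 1 →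
      (c,a1,a2,a3,a4,a5,a6) ∈ linesT := by decide

set_option maxRecDepth 100000 in
set_option maxHeartbeats 1000000 in
lemma bridgeF : ∀ c ∈ Finset.Icc (1:ℤ) 3, ∀ a1 ∈ Finset.Icc (-2:ℤ) 1, ∀ a2 ∈ Finset.Icc (-2:ℤ) 1,
    ∀ a3 ∈ Finset.Icc (-2:ℤ) 1, ∀ a4 ∈ Finset.Icc (-2:ℤ) 1, ∀ a5 ∈ Finset.Icc (-2:ℤ) 1,
    ∀ a6 ∈ Finset.Icc (-2:ℤ) 1,
    c*c - (a1*a1+a2*a2+a3*a3+a4*a4+a5*a5+a6*a6) = 0 ∧ 3*c + (a1+a2+a3+a4+a5+a6) = 2 →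
      (c,a1,a2,a3,a4,a5,a6) ∈ fibersT := by decide

set_option maxRecDepth 200000 in
set_option maxHeartbeats 4000000 in
lemma bridgeC : ∀ c ∈ Finset.Icc (2:ℤ) 6, ∀ a1 ∈ Finset.Icc (-3:ℤ) 0, ∀ a2 ∈ Finset.Icc (-3:ℤ) 0,
    ∀ a3 ∈ Finset.Icc (-3:ℤ) 0, ∀ a4 ∈ Finset.Icc (-3:ℤ) 0, ∀ a5 ∈ Finset.Icc (-3:ℤ) 0,
    ∀ a6 ∈ Finset.Icc (-3:ℤ) 0,
    c*c - (a1*a1+a2*a2+a3*a3+a4*a4+a5*a5+a6*a6) = 2 ∧ 3*c + (a1+a2+a3+a4+a5+a6) = 4 →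
      (c,a1,a2,a3,a4,a5,a6) ∈ CsT := by decide

/- Classification: forward directions -/
lemma isC_mem {x : Lam} (h2 : ip x x = 2) (h4 : ip x Kc = -4) : x ∈ CsL := by
  rw [ip_eval] at h2
  rw [ipK] at h4
  have hs : 3 * x 0 + (x 1 + x 2 + x 3 + x 4 + x 5 + x 6) = 4 := by linarith
  have hq : x 0 * x 0 - (x 1*x 1 + x 2*x 2 + x 3*x 3 + x 4*x 4 + x 5*x 5 + x 6*x 6) = 2 := by
    linarith
  have hc := cbndC hq hs
  have key := keyC hc.1 hc.2
  have b1 := abound (a := x 1) (b1 := x 2) (b2 := x 3) (b3 := x 4) (b4 := x 5) (b5 := x 6) (c := x 0) (by linarith) (by linarith) key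
  have b2 := abound (a := x 2) (b1 := x 1) (b2 := x 3) (b3 := x 4) (b4 := x 5) (b5 := x 6) (c := x 0) (by linarith) (by linarith) key
  have b3 := abound (a := x 3) (b1 := x 1) (b2 := x 2) (b3 := x 4) (b4 := x 5) (b5 := x 6) (c := x 0) (by linarith) (by linarith) key
  have b4 := abound (a := x 4) (b1 := x 1) (b2 := x 2) (b3 := x 3) (b4 := x 5) (b5 := x 6) (c := x 0) (by linarith) (by linarith) key
  have b5 := abound (a := x 5) (b1 := x 1) (b2 := x 2) (b3 := x 3) (b4 := x 4) (b5 := x 6) (c := x 0) (by linarith) (by linarith) key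
  have b6 := abound (a := x 6) (b1 := x 1) (b2 := x 2) (b3 := x 3) (b4 := x 4) (b5 := x 5) (c := x 0) (by linarith) (by linarith) key
  have hmem := bridgeC (x 0) (Finset.mem_Icc.mpr hc) (x 1) (Finset.mem_Icc.mpr b1)
    (x 2) (Finset.mem_Icc.mpr b2) (x 3) (Finset.mem_Icc.mpr b3) (x 4) (Finset.mem_Icc.mpr b4)
    (x 5) (Finset.mem_Icc.mpr b5) (x 6) (Finset.mem_Icc.mpr b6) ⟨hq, hs⟩
  rw [eq_toLam x]
  exact List.mem_map_of_mem (f := toLam) hmem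

lemma isLine_mem {x : Lam} (h : IsLine x) : x ∈ linesL := by
  obtain ⟨h2, h4⟩ := h
  rw [ip_eval] at h2
  rw [ipK] at h4
  have hs : 3 * x 0 + (x 1 + x 2 + x 3 + x 4 + x 5 + x 6) = 1 := by linarith
  have hq : x 0 * x 0 - (x 1*x 1 + x 2*x 2 + x 3*x 3 + x 4*x 4 + x 5*x 5 + x 6*x 6) = -1 := by
    linarith
  have hc := cbndL hq hs
  have key := keyL hc.1 hc.2
  have b1 := abound (a := x 1) (b1 := x 2) (b2 := x 3) (b3 := x 4) (b4 := x 5) (b5 := x 6) (c := x 0) (by linarith) (by linarith) key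
  have b2 := abound (a := x 2) (b1 := x 1) (b2 := x 3) (b3 := x 4) (b4 := x 5) (b5 := x 6) (c := x 0) (by linarith) (by linarith) key
  have b3 := abound (a := x 3) (b1 := x 1) (b2 := x 2) (b3 := x 4) (b4 := x 5) (b5 := x 6) (c := x 0) (by linarith) (by linarith) key
  have b4 := abound (a := x 4) (b1 := x 1) (b2 := x 2) (b3 := x 3) (b4 := x 5) (b5 := x 6) (c := x 0) (by linarith) (by linarith) key
  have b5 := abound (a := x 5) (b1 := x 1) (b2 := x 2) (b3 := x 3) (b4 := x 4) (b5 := x 6) (c := x 0) (by linarith) (by linarith) key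
  have b6 := abound (a := x 6) (b1 := x 1) (b2 := x 2) (b3 := x 3) (b4 := x 4) (b5 := x 5) (c := x 0) (by linarith) (by linarith) key
  have hmem := bridgeL (x 0) (Finset.mem_Icc.mpr hc) (x 1) (Finset.mem_Icc.mpr b1)
    (x 2) (Finset.mem_Icc.mpr b2) (x 3) (Finset.mem_Icc.mpr b3) (x 4) (Finset.mem_Icc.mpr b4)
    (x 5) (Finset.mem_Icc.mpr b5) (x 6) (Finset.mem_Icc.mpr b6) ⟨hq, hs⟩
  rw [eq_toLam x]
  exact List.mem_map_of_mem (f := toLam) hmem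

lemma isFiber_mem {x : Lam} (h : IsFiber x) : x ∈ fibersL := by
  obtain ⟨h2, h4⟩ := h
  rw [ip_eval] at h2
  rw [ipK] at h4
  have hs : 3 * x 0 + (x 1 + x 2 + x 3 + x 4 + x 5 + x 6) = 2 := by linarith
  have hq : x 0 * x 0 - (x 1*x 1 + x 2*x 2 + x 3*x 3 + x 4*x 4 + x 5*x 5 + x 6*x 6) = 0 := by
    linarith
  have hc := cbndF hq hs
  have key := keyF hc.1 hc.2
  have b1 := abound (a := x 1) (b1 := x 2) (b2 := x 3) (b3 := x 4) (b4 := x 5) (b5 := x 6) (c := x 0) (by linarith) (by linarith) key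
  have b2 := abound (a := x 2) (b1 := x 1) (b2 := x 3) (b3 := x 4) (b4 := x 5) (b5 := x 6) (c := x 0) (by linarith) (by linarith) key
  have b3 := abound (a := x 3) (b1 := x 1) (b2 := x 2) (b3 := x 4) (b4 := x 5) (b5 := x 6) (c := x 0) (by linarith) (by linarith) key
  have b4 := abound (a := x 4) (b1 := x 1) (b2 := x 2) (b3 := x 3) (b4 := x 5) (b5 := x 6) (c := x 0) (by linarith) (by linarith) key
  have b5 := abound (a := x 5) (b1 := x 1) (b2 := x 2) (b3 := x 3) (b4 := x 4) (b5 := x 6) (c := x 0) (by linarith) (by linarith) key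
  have b6 := abound (a := x 6) (b1 := x 1) (b2 := x 2) (b3 := x 3) (b4 := x 4) (b5 := x 5) (c := x 0) (by linarith) (by linarith) key
  have hmem := bridgeF (x 0) (Finset.mem_Icc.mpr hc) (x 1) (Finset.mem_Icc.mpr b1)
    (x 2) (Finset.mem_Icc.mpr b2) (x 3) (Finset.mem_Icc.mpr b3) (x 4) (Finset.mem_Icc.mpr b4)
    (x 5) (Finset.mem_Icc.mpr b5) (x 6) (Finset.mem_Icc.mpr b6) ⟨hq, hs⟩
  rw [eq_toLam x]
  exact List.mem_map_of_mem (f := toLam) hmem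

/- Classification: backward directions -/
lemma linesL_isLine : ∀ x ∈ linesL, IsLine x := by
  unfold IsLine; decide

lemma fibersL_isFiber : ∀ x ∈ fibersL, IsFiber x := by
  unfold IsFiber; decide

lemma isLine_iff (x : Lam) : IsLine x ↔ x ∈ linesL :=
  ⟨isLine_mem, fun h => linesL_isLine x h⟩

lemma isFiber_iff (x : Lam) : IsFiber x ↔ x ∈ fibersL :=
  ⟨isFiber_mem, fun h => fibersL_isFiber x h⟩

/- Per-C line and fiber-pair lists -/
def lineList (C : Lam) : List Lam := linesL.filter (fun E => ip C E = 0)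
def fibList (C : Lam) : List Lam := fibersL.filter (fun F => ip C F = 1)
def pairList (C : Lam) : List (Lam × Lam) := (fibList C).map (fun F => (F, C - F))

lemma linesL_nodup : linesL.Nodup := by decide
lemma fibersL_nodup : fibersL.Nodup := by decide

lemma lineList_nodup (C : Lam) : (lineList C).Nodup := linesL_nodup.filter _
lemma pairList_nodup (C : Lam) : (pairList C).Nodup :=
  ((fibersL_nodup.filter _).map (fun a b h => congrArg Prod.fst h))

/- Set identifications -/
lemma setL_eq (C : Lam) :
    {E : Lam | IsLine E ∧ ip C E = 0} = ↑(lineList C).toFinset := by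
  ext E
  simp only [Set.mem_setOf_eq, Finset.coe_sort_coe, List.coe_toFinset, List.mem_filter,
    lineList, Set.mem_setOf_eq, List.mem_filter, decide_eq_true_eq]
  rw [isLine_iff]

lemma fiber_compl {C F : Lam} (hC2 : ip C C = 2) (hC4 : ip C Kc = -4)
    (hF : IsFiber F) (h1 : ip C F = 1) : IsFiber (C - F) := by
  obtain ⟨hf0, hfK⟩ := hF
  constructor
  · rw [ip_sub_left, ip_sub_right, ip_sub_right, ip_comm F C, hC2, h1, hf0]; ring
  · rw [ip_sub_left, hC4, hfK]; ring

lemma pair_val {C F G : Lam} (hC2 : ip C C = 2)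
    (hF : IsFiber F) (hG : IsFiber G) (hFG : F + G = C) : ip C F = 1 ∧ G = C - F := by
  have hG' : G = C - F := by rw [← hFG]; abel
  have h := hC2
  rw [← hFG, ip_add_left, ip_add_right, ip_add_right, ip_comm G F, hF.1, hG.1] at h
  have hFG1 : ip F G = 1 := by linarith
  have : ip C F = 1 := by
    rw [← hFG, ip_add_left, ip_comm G F, hF.1, hFG1]; ring
  exact ⟨this, hG'⟩

lemma setP_eq {C : Lam} (hC2 : ip C C = 2) (hC4 : ip C Kc = -4) :
    {p : Lam × Lam | IsFiber p.1 ∧ IsFiber p.2 ∧ p.1 + p.2 = C} = ↑(pairList C).toFinset := by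
  ext ⟨F, G⟩
  simp only [Set.mem_setOf_eq, List.coe_toFinset, List.mem_filter, pairList, fibList,
    List.mem_map, List.mem_filter, decide_eq_true_eq, Prod.mk.injEq]
  constructor
  · rintro ⟨hF, hG, hFG⟩
    obtain ⟨h1, hG'⟩ := pair_val hC2 hF hG hFG
    exact ⟨F, ⟨isFiber_mem hF, h1⟩, rfl, hG'.symm⟩
  · rintro ⟨F', ⟨hF', h1⟩, rfl, rfl⟩
    have hF : IsFiber F' := fibersL_isFiber F' hF'
    refine ⟨hF, fiber_compl hC2 hC4 hF h1, ?_⟩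
    abel

/- Linear-map machinery -/
def ipL (y : Lam) : Lam →ₗ[ℤ] ℤ where
  toFun x := ip x y
  map_add' x z := ip_add_left x z y
  map_smul' c x := by simp only [smul_eq_mul, RingHom.id_apply, ip_smul_left]

def lmap (l : List (Lam × Lam)) : Lam →ₗ[ℤ] Lam :=
  (l.map (fun p => (ipL p.1).smulRight p.2)).sum

lemma lmap_apply (l : List (Lam × Lam)) (D : Lam) :
    lmap l D = (l.map (fun p => ip D p.1 • p.2)).sum := by
  induction l with
  | nil => rfl
  | cons p t ih =>
    simp only [lmap, List.map_cons, List.sum_cons, LinearMap.add_apply] at *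
    rw [ih]
    rfl

set_option maxRecDepth 100000 in
set_option maxHeartbeats 4000000 in
lemma core0 : ∀ t ∈ CsT0, ∀ k : Fin 7,
    (Pi.single k 1 : Lam) + ((lineList (toLam t)).map (fun E => ip (Pi.single k 1) E • E)).sum
      = ((pairList (toLam t)).map (fun p => ip (Pi.single k 1) p.1 • p.2)).sum := by decide

set_option maxRecDepth 100000 in
set_option maxHeartbeats 4000000 in
lemma core1 : ∀ t ∈ CsT1, ∀ k : Fin 7,
    (Pi.single k 1 : Lam) + ((lineList (toLam t)).map (fun E => ip (Pi.single k 1) E • E)).sum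
      = ((pairList (toLam t)).map (fun p => ip (Pi.single k 1) p.1 • p.2)).sum := by decide

set_option maxRecDepth 100000 in
set_option maxHeartbeats 4000000 in
lemma core2 : ∀ t ∈ CsT2, ∀ k : Fin 7,
    (Pi.single k 1 : Lam) + ((lineList (toLam t)).map (fun E => ip (Pi.single k 1) E • E)).sum
      = ((pairList (toLam t)).map (fun p => ip (Pi.single k 1) p.1 • p.2)).sum := by decide

set_option maxRecDepth 100000 in
set_option maxHeartbeats 4000000 in
lemma core3 : ∀ t ∈ CsT3, ∀ k : Fin 7,
    (Pi.single k 1 : Lam) + ((lineList (toLam t)).map (fun E => ip (Pi.single k 1) E • E)).sum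
      = ((pairList (toLam t)).map (fun p => ip (Pi.single k 1) p.1 • p.2)).sum := by decide

set_option maxRecDepth 100000 in
set_option maxHeartbeats 4000000 in
lemma core4 : ∀ t ∈ CsT4, ∀ k : Fin 7,
    (Pi.single k 1 : Lam) + ((lineList (toLam t)).map (fun E => ip (Pi.single k 1) E • E)).sum
      = ((pairList (toLam t)).map (fun p => ip (Pi.single k 1) p.1 • p.2)).sum := by decide

set_option maxRecDepth 100000 in
set_option maxHeartbeats 4000000 in
lemma core5 : ∀ t ∈ CsT5, ∀ k : Fin 7,
    (Pi.single k 1 : Lam) + ((lineList (toLam t)).map (fun E => ip (Pi.single k 1) E • E)).sum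
      = ((pairList (toLam t)).map (fun p => ip (Pi.single k 1) p.1 • p.2)).sum := by decide

set_option maxRecDepth 100000 in
set_option maxHeartbeats 4000000 in
lemma core6 : ∀ t ∈ CsT6, ∀ k : Fin 7,
    (Pi.single k 1 : Lam) + ((lineList (toLam t)).map (fun E => ip (Pi.single k 1) E • E)).sum
      = ((pairList (toLam t)).map (fun p => ip (Pi.single k 1) p.1 • p.2)).sum := by decide

set_option maxRecDepth 100000 in
set_option maxHeartbeats 4000000 in
lemma core7 : ∀ t ∈ CsT7, ∀ k : Fin 7,
    (Pi.single k 1 : Lam) + ((lineList (toLam t)).map (fun E => ip (Pi.single k 1) E • E)).sum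
      = ((pairList (toLam t)).map (fun p => ip (Pi.single k 1) p.1 • p.2)).sum := by decide

set_option maxRecDepth 100000 in
set_option maxHeartbeats 4000000 in
lemma core8 : ∀ t ∈ CsT8, ∀ k : Fin 7,
    (Pi.single k 1 : Lam) + ((lineList (toLam t)).map (fun E => ip (Pi.single k 1) E • E)).sum
      = ((pairList (toLam t)).map (fun p => ip (Pi.single k 1) p.1 • p.2)).sum := by decide

lemma core : ∀ t ∈ CsT, ∀ k : Fin 7,
    (Pi.single k 1 : Lam) + ((lineList (toLam t)).map (fun E => ip (Pi.single k 1) E • E)).sum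
      = ((pairList (toLam t)).map (fun p => ip (Pi.single k 1) p.1 • p.2)).sum := by
  intro t ht
  simp only [CsT, List.append_assoc, List.mem_append] at ht
  rcases ht with h|h|h|h|h|h|h|h|h
  · exact core0 t h
  · exact core1 t h
  · exact core2 t h
  · exact core3 t h
  · exact core4 t h
  · exact core5 t h
  · exact core6 t h
  · exact core7 t h
  · exact core8 t h

/-- For ⟨C,C⟩ = 2, ⟨C,K⟩ = −4 and any D:
D + Σ_{E line, ⟨C,E⟩=0} ⟨D,E⟩·E = Σ_{(F,G) fibers, F+G=C} ⟨D,F⟩·G. -/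
theorem assoc_identity_genus0 :
    ∀ C : Lam, ip C C = 2 → ip C Kc = -4 →
    {E : Lam | IsLine E ∧ ip C E = 0}.Finite ∧
    {p : Lam × Lam | IsFiber p.1 ∧ IsFiber p.2 ∧ p.1 + p.2 = C}.Finite ∧
    ∀ D : Lam,
      D + ∑ᶠ E ∈ {E : Lam | IsLine E ∧ ip C E = 0}, ip D E • E =
      ∑ᶠ p ∈ {p : Lam × Lam | IsFiber p.1 ∧ IsFiber p.2 ∧ p.1 + p.2 = C},
        ip D p.1 • p.2 := by
  intro C hC2 hC4
  refine ⟨?_, ?_, ?_⟩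
  · rw [setL_eq]; exact (lineList C).toFinset.finite_toSet
  · rw [setP_eq hC2 hC4]; exact (pairList C).toFinset.finite_toSet
  · intro D
    obtain ⟨t, ht, hC⟩ := List.mem_map.mp (isC_mem hC2 hC4)
    rw [setL_eq, setP_eq hC2 hC4, finsum_mem_coe_finset, finsum_mem_coe_finset,
        List.sum_toFinset _ (lineList_nodup C), List.sum_toFinset _ (pairList_nodup C)]
    have hmaps : (LinearMap.id (R := ℤ) (M := Lam)) + lmap ((lineList C).map (fun E => (E, E)))
        = lmap (pairList C) := by
      apply (Pi.basisFun ℤ (Fin 7)).ext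
      intro k
      have hcore := core t ht k
      rw [hC] at hcore
      simp only [LinearMap.add_apply, LinearMap.id_apply, Pi.basisFun_apply, lmap_apply,
        List.map_map, Function.comp_def]
      exact hcore
    have hD := LinearMap.congr_fun hmaps D
    simp only [LinearMap.add_apply, LinearMap.id_apply, lmap_apply, List.map_map,
      Function.comp_def] at hD
    exact hD
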